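/- Let G be a connected r-regular finite simple graph on n ≥ 2 vertices, let λ₁ be the largest eigenvalue of the adjacency matrix M different from r (i.e., λ₁ is an eigenvalue, λ₁ < r, and every eigenvalue μ ≠ r satisfies μ ≤ λ₁), and let λ_k be the smallest eigenvalue of M. Then for every nonempty proper subset A ⊆ V with B = V∖A: (r−λ₁)|A||B|/n ≤ e(A,B) ≤ (r−λ_k)|A||B|/n. Moreover, the lower bound is attained if and only if {A,B} is an equitable partition with eigenvalue λ₁, and the upper bound is attained if and only if {A,B} is an equitable partition with eigenvalue λ_k. -/

import Mathlib

open Finset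
open scoped Classical

section Spectral

variable {V : Type*} [Fintype V] [DecidableEq V]

/-- Rayleigh two-sided bound with equality cases, for vectors with zero sum,
assuming eigenvectors of eigenvalue `r` are constant. -/
lemma spectral_twoside_aux (M : Matrix V V ℝ) (hM : M.IsHermitian)
    (r lam1 lamk : ℝ)
    (h1max : ∀ μ : ℝ, (∃ g : V → ℝ, g ≠ 0 ∧ M.mulVec g = μ • g) → μ ≠ r → μ ≤ lam1)
    (hkmin : ∀ μ : ℝ, (∃ g : V → ℝ, g ≠ 0 ∧ M.mulVec g = μ • g) → lamk ≤ μ)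
    (hrconst : ∀ g : V → ℝ, M.mulVec g = r • g → ∃ c : ℝ, ∀ x, g x = c)
    (f : V → ℝ) (hfsum : ∑ x, f x = 0) :
    (lamk * ∑ x, f x * f x ≤ ∑ x, f x * M.mulVec f x) ∧
    (∑ x, f x * M.mulVec f x ≤ lam1 * ∑ x, f x * f x) ∧
    (∑ x, f x * M.mulVec f x = lam1 * ∑ x, f x * f x ↔ M.mulVec f = lam1 • f) ∧
    (∑ x, f x * M.mulVec f x = lamk * ∑ x, f x * f x ↔ M.mulVec f = lamk • f) := by
  set B := hM.eigenvectorBasis with hB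
  set μ : V → ℝ := hM.eigenvalues with hμ
  have hBeig : ∀ i, M.mulVec (B i) = μ i • (B i : V → ℝ) := fun i => hM.mulVec_eigenvectorBasis i
  have hON : ∀ i j, (∑ x, B i x * B j x) = if i = j then 1 else 0 := by
    intro i j
    have h := B.orthonormal
    rw [orthonormal_iff_ite] at h
    have h2 := h i j
    rw [PiLp.inner_apply] at h2
    simpa [mul_comm] using h2
  have hBne : ∀ i, (B i : V → ℝ) ≠ 0 := by
    intro i hzero
    have h := hON i i
    rw [if_pos rfl] at h
    rw [show (B i : V → ℝ) = 0 from hzero] at h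
    simp at h
  set c : V → ℝ := fun i => ∑ y, B i y * f y with hc
  have hrepr : ∀ x, f x = ∑ i, c i * B i x := by
    intro x
    have h := B.sum_repr' (WithLp.toLp 2 f)
    have h2 := congrFun (congrArg (fun v : EuclideanSpace ℝ V => (v : V → ℝ)) h) x
    simp only [PiLp.inner_apply, RCLike.inner_apply, map_one, conj_trivial, WithLp.ofLp_toLp] at h2
    rw [← h2]
    rw [WithLp.ofLp_sum]
    exact (Finset.sum_apply x univ _).trans (Finset.sum_congr rfl fun i _ => by
      rw [WithLp.ofLp_smul, Pi.smul_apply, smul_eq_mul]; congr 1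
      exact Finset.sum_congr rfl fun y _ => mul_comm _ _)
  have hMf : ∀ x, M.mulVec f x = ∑ i, c i * (μ i * B i x) := by
    intro x
    calc M.mulVec f x = ∑ y, M x y * f y := by
          simp [Matrix.mulVec, dotProduct]
      _ = ∑ y, M x y * ∑ i, c i * B i y := by
          refine Finset.sum_congr rfl fun y _ => ?_
          rw [← hrepr y]
      _ = ∑ y, ∑ i, c i * (M x y * B i y) := by
          refine Finset.sum_congr rfl fun y _ => ?_
          rw [Finset.mul_sum]
          exact Finset.sum_congr rfl fun i _ => by ring
      _ = ∑ i, ∑ y, c i * (M x y * B i y) := Finset.sum_comm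
      _ = ∑ i, c i * (μ i * B i x) := by
          refine Finset.sum_congr rfl fun i _ => ?_
          rw [← Finset.mul_sum]
          congr 1
          have h := congrFun (hBeig i) x
          calc (∑ y, M x y * B i y) = M.mulVec (B i) x := by
                simp [Matrix.mulVec, dotProduct]
            _ = μ i * B i x := h
  have hquad : ∑ x, f x * M.mulVec f x = ∑ i, μ i * c i ^ 2 := by
    calc ∑ x, f x * M.mulVec f x
        = ∑ x, (∑ i, c i * B i x) * (∑ j, c j * (μ j * B j x)) := by
          refine Finset.sum_congr rfl fun x _ => ?_
          rw [← hrepr x, ← hMf x]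
      _ = ∑ x, ∑ i, ∑ j, (c i * c j * μ j) * (B i x * B j x) := by
          refine Finset.sum_congr rfl fun x _ => ?_
          rw [Finset.sum_mul_sum]
          exact Finset.sum_congr rfl fun i _ => Finset.sum_congr rfl fun j _ => by ring
      _ = ∑ i, ∑ j, (c i * c j * μ j) * (∑ x, B i x * B j x) := by
          rw [Finset.sum_comm]
          refine Finset.sum_congr rfl fun i _ => ?_
          rw [Finset.sum_comm]
          exact Finset.sum_congr rfl fun j _ => (Finset.mul_sum _ _ _).symm
      _ = ∑ i, μ i * c i ^ 2 := by
          refine Finset.sum_congr rfl fun i _ => ?_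
          rw [Finset.sum_eq_single i]
          · rw [hON i i, if_pos rfl]; ring
          · intro j _ hj
            rw [hON i j, if_neg (fun h => hj h.symm)]; ring
          · intro h; exact absurd (Finset.mem_univ i) h
  have hnorm : ∑ x, f x * f x = ∑ i, c i ^ 2 := by
    calc ∑ x, f x * f x
        = ∑ x, (∑ i, c i * B i x) * (∑ j, c j * B j x) := by
          refine Finset.sum_congr rfl fun x _ => ?_
          rw [← hrepr x]
      _ = ∑ x, ∑ i, ∑ j, (c i * c j) * (B i x * B j x) := by
          refine Finset.sum_congr rfl fun x _ => ?_
          rw [Finset.sum_mul_sum]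
          exact Finset.sum_congr rfl fun i _ => Finset.sum_congr rfl fun j _ => by ring
      _ = ∑ i, ∑ j, (c i * c j) * (∑ x, B i x * B j x) := by
          rw [Finset.sum_comm]
          refine Finset.sum_congr rfl fun i _ => ?_
          rw [Finset.sum_comm]
          exact Finset.sum_congr rfl fun j _ => (Finset.mul_sum _ _ _).symm
      _ = ∑ i, c i ^ 2 := by
          refine Finset.sum_congr rfl fun i _ => ?_
          rw [Finset.sum_eq_single i]
          · rw [hON i i, if_pos rfl]; ring
          · intro j _ hj
            rw [hON i j, if_neg (fun h => hj h.symm)]; ring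
          · intro h; exact absurd (Finset.mem_univ i) h
  have hcr : ∀ i, μ i = r → c i = 0 := by
    intro i hi
    obtain ⟨k, hk⟩ := hrconst (B i) (by rw [hBeig i, hi])
    calc c i = ∑ y, k * f y := Finset.sum_congr rfl fun y _ => by rw [hk y]
      _ = k * ∑ y, f y := by rw [Finset.mul_sum]
      _ = 0 := by rw [hfsum, mul_zero]
  have hup : ∀ i, c i ≠ 0 → μ i ≤ lam1 := by
    intro i hci
    by_cases hi : μ i = r
    · exact absurd (hcr i hi) hci
    · exact h1max (μ i) ⟨B i, hBne i, hBeig i⟩ hi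
  have hlo : ∀ i, lamk ≤ μ i := fun i => hkmin (μ i) ⟨B i, hBne i, hBeig i⟩
  -- nonneg term sums
  have hupper_terms : ∀ i ∈ univ, (0:ℝ) ≤ (lam1 - μ i) * c i ^ 2 := by
    intro i _
    by_cases hci : c i = 0
    · simp [hci]
    · exact mul_nonneg (by linarith [hup i hci]) (sq_nonneg _)
  have hlower_terms : ∀ i ∈ univ, (0:ℝ) ≤ (μ i - lamk) * c i ^ 2 := by
    intro i _
    exact mul_nonneg (by linarith [hlo i]) (sq_nonneg _)
  have hupper : ∑ i, μ i * c i ^ 2 ≤ lam1 * ∑ i, c i ^ 2 := by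
    have h := Finset.sum_nonneg hupper_terms
    have hexp : ∑ i, (lam1 - μ i) * c i ^ 2
        = lam1 * ∑ i, c i ^ 2 - ∑ i, μ i * c i ^ 2 := by
      rw [Finset.mul_sum, ← Finset.sum_sub_distrib]
      exact Finset.sum_congr rfl fun i _ => by ring
    linarith [hexp ▸ h]
  have hlower : lamk * ∑ i, c i ^ 2 ≤ ∑ i, μ i * c i ^ 2 := by
    have h := Finset.sum_nonneg hlower_terms
    have hexp : ∑ i, (μ i - lamk) * c i ^ 2
        = ∑ i, μ i * c i ^ 2 - lamk * ∑ i, c i ^ 2 := by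
      rw [Finset.mul_sum, ← Finset.sum_sub_distrib]
      exact Finset.sum_congr rfl fun i _ => by ring
    linarith [hexp ▸ h]
  have heigen_of : ∀ lam : ℝ, (∀ i, c i * μ i = c i * lam) → M.mulVec f = lam • f := by
    intro lam hcl
    funext x
    have : M.mulVec f x = ∑ i, lam * (c i * B i x) := by
      rw [hMf x]
      refine Finset.sum_congr rfl fun i _ => ?_
      linear_combination (B i x) * hcl i
    rw [this, ← Finset.mul_sum, ← hrepr x]
    rfl
  have hof_eigen : ∀ lam : ℝ, M.mulVec f = lam • f →
      ∑ x, f x * M.mulVec f x = lam * ∑ x, f x * f x := by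
    intro lam h
    rw [h, Finset.mul_sum]
    refine Finset.sum_congr rfl fun x _ => ?_
    have : (lam • f) x = lam * f x := rfl
    rw [this]; ring
  refine ⟨?_, ?_, ?_, ?_⟩
  · rw [hquad, hnorm]; exact hlower
  · rw [hquad, hnorm]; exact hupper
  · constructor
    · intro h
      rw [hquad, hnorm] at h
      have hzero : ∑ i, (lam1 - μ i) * c i ^ 2 = 0 := by
        have hexp : ∑ i, (lam1 - μ i) * c i ^ 2
            = lam1 * ∑ i, c i ^ 2 - ∑ i, μ i * c i ^ 2 := by
          rw [Finset.mul_sum, ← Finset.sum_sub_distrib]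
          exact Finset.sum_congr rfl fun i _ => by ring
        rw [hexp]; linarith
      have heach := (Finset.sum_eq_zero_iff_of_nonneg hupper_terms).1 hzero
      refine heigen_of lam1 fun i => ?_
      by_cases hci : c i = 0
      · rw [hci]; ring
      · have h2 := heach i (Finset.mem_univ i)
        have h3 : lam1 - μ i = 0 := by
          rcases mul_eq_zero.1 h2 with h | h
          · exact h
          · exact absurd ((pow_eq_zero_iff two_ne_zero).1 h) hci
        linear_combination (- c i) * h3
    · exact hof_eigen lam1
  · constructor
    · intro h
      rw [hquad, hnorm] at h
      have hzero : ∑ i, (μ i - lamk) * c i ^ 2 = 0 := by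
        have hexp : ∑ i, (μ i - lamk) * c i ^ 2
            = ∑ i, μ i * c i ^ 2 - lamk * ∑ i, c i ^ 2 := by
          rw [Finset.mul_sum, ← Finset.sum_sub_distrib]
          exact Finset.sum_congr rfl fun i _ => by ring
        rw [hexp]; linarith
      have heach := (Finset.sum_eq_zero_iff_of_nonneg hlower_terms).1 hzero
      refine heigen_of lamk fun i => ?_
      by_cases hci : c i = 0
      · rw [hci]; ring
      · have h2 := heach i (Finset.mem_univ i)
        have h3 : μ i - lamk = 0 := by
          rcases mul_eq_zero.1 h2 with h | h
          · exact h
          · exact absurd ((pow_eq_zero_iff two_ne_zero).1 h) hci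
        linear_combination (c i) * h3
    · exact hof_eigen lamk

end Spectral

section Const

variable {V : Type*} [Fintype V]

lemma eigen_r_const (G : SimpleGraph V) [DecidableRel G.Adj]
    (hconn : G.Connected) {r : ℕ} (hreg : G.IsRegularOfDegree r)
    (g : V → ℝ) (hg : (G.adjMatrix ℝ).mulVec g = (r : ℝ) • g) :
    ∃ c : ℝ, ∀ x, g x = c := by
  have hne : Nonempty V := hconn.nonempty
  obtain ⟨x₀, -, hx₀⟩ := Finset.exists_max_image univ g ⟨Classical.arbitrary V, mem_univ _⟩
  refine ⟨g x₀, fun x => ?_⟩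
  have step : ∀ y z : V, G.Adj y z → g y = g x₀ → g z = g x₀ := by
    intro y z hyz hy
    have hrow : ∑ u ∈ G.neighborFinset y, g u = (r : ℝ) * g x₀ := by
      have h := congrFun hg y
      rw [SimpleGraph.adjMatrix_mulVec_apply] at h
      rw [h, Pi.smul_apply, smul_eq_mul, hy]
    have hzero : ∑ u ∈ G.neighborFinset y, (g x₀ - g u) = 0 := by
      rw [Finset.sum_sub_distrib, hrow, Finset.sum_const, G.card_neighborFinset_eq_degree,
        hreg y]
      simp [nsmul_eq_mul]
    have heach := (Finset.sum_eq_zero_iff_of_nonneg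
      (fun u _ => sub_nonneg.2 (hx₀ u (mem_univ u)))).1 hzero
    have hz := heach z ((SimpleGraph.mem_neighborFinset G y z).2 hyz)
    linarith
  have key : ∀ (u v : V) (_ : G.Walk u v), g u = g x₀ → g v = g x₀ := by
    intro u v w
    induction w with
    | nil => exact id
    | cons h p ih => intro hu; exact ih (step _ _ h hu)
  obtain ⟨w⟩ := hconn.preconnected x₀ x
  exact key x₀ x w rfl

end Const

section Combinatorial

variable {V : Type*} [Fintype V]

lemma deg_split (G : SimpleGraph V) [DecidableRel G.Adj] {r : ℕ}
    (hreg : G.IsRegularOfDegree r) (A : Finset V) (x : V) :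
    ((A.filter fun y => G.Adj x y).card : ℝ)
      + ((Aᶜ.filter fun y => G.Adj x y).card : ℝ) = r := by
  have hU : (A.filter fun y => G.Adj x y) ∪ (Aᶜ.filter fun y => G.Adj x y)
      = univ.filter fun y => G.Adj x y := by
    rw [← Finset.filter_union, Finset.union_compl]
  have hd : Disjoint (A.filter fun y => G.Adj x y) (Aᶜ.filter fun y => G.Adj x y) :=
    Finset.disjoint_filter_filter disjoint_compl_right
  have hcard : (A.filter fun y => G.Adj x y).card + (Aᶜ.filter fun y => G.Adj x y).card
      = (univ.filter fun y => G.Adj x y).card := by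
    rw [← hU, Finset.card_union_of_disjoint hd]
  have hdeg : (univ.filter fun y => G.Adj x y).card = r := by
    rw [← SimpleGraph.neighborFinset_eq_filter, G.card_neighborFinset_eq_degree, hreg x]
  push_cast [← hcard, hdeg]
  norm_cast
  rw [hcard, hdeg]

lemma mulVec_cut (G : SimpleGraph V) [DecidableRel G.Adj] (A : Finset V) (x : V) :
    (G.adjMatrix ℝ).mulVec
        (fun z => if z ∈ A then (Aᶜ.card : ℝ) else -(A.card : ℝ)) x
      = (Aᶜ.card : ℝ) * ((A.filter fun y => G.Adj x y).card : ℝ)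
        - (A.card : ℝ) * ((Aᶜ.filter fun y => G.Adj x y).card : ℝ) := by
  rw [SimpleGraph.adjMatrix_mulVec_apply]
  rw [Finset.sum_ite]
  rw [Finset.sum_const, Finset.sum_const]
  have h1 : (G.neighborFinset x).filter (fun u => u ∈ A) = A.filter fun y => G.Adj x y := by
    ext u
    simp [SimpleGraph.mem_neighborFinset, and_comm]
  have h2 : (G.neighborFinset x).filter (fun u => ¬ u ∈ A) = Aᶜ.filter fun y => G.Adj x y := by
    ext u
    simp [SimpleGraph.mem_neighborFinset, and_comm]
  rw [h1, h2]
  simp [nsmul_eq_mul]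
  ring

lemma cut_sym (G : SimpleGraph V) [DecidableRel G.Adj] (A : Finset V) :
    ∑ x ∈ A, ((Aᶜ.filter fun y => G.Adj x y).card : ℝ)
      = ∑ x ∈ Aᶜ, ((A.filter fun y => G.Adj x y).card : ℝ) := by
  have h1 : ∀ (s : Finset V) (x : V), ((s.filter fun y => G.Adj x y).card : ℝ)
      = ∑ y ∈ s, if G.Adj x y then (1 : ℝ) else 0 := by
    intro s x
    rw [Finset.sum_ite, Finset.sum_const, Finset.sum_const]
    simp
  calc ∑ x ∈ A, ((Aᶜ.filter fun y => G.Adj x y).card : ℝ)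
      = ∑ x ∈ A, ∑ y ∈ Aᶜ, if G.Adj x y then (1:ℝ) else 0 :=
        Finset.sum_congr rfl fun x _ => h1 Aᶜ x
    _ = ∑ y ∈ Aᶜ, ∑ x ∈ A, if G.Adj x y then (1:ℝ) else 0 := Finset.sum_comm
    _ = ∑ y ∈ Aᶜ, ∑ x ∈ A, if G.Adj y x then (1:ℝ) else 0 := by
        refine Finset.sum_congr rfl fun y _ => Finset.sum_congr rfl fun x _ => ?_
        by_cases h : G.Adj x y
        · rw [if_pos h, if_pos h.symm]
        · rw [if_neg h, if_neg fun hc => h hc.symm]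
    _ = ∑ y ∈ Aᶜ, ((A.filter fun x => G.Adj y x).card : ℝ) :=
        Finset.sum_congr rfl fun y _ => (h1 A y).symm

end Combinatorial

section Equitable

variable {V : Type*} [Fintype V]

lemma eigen_iff_equitable (G : SimpleGraph V) [DecidableRel G.Adj] {r : ℕ}
    (hreg : G.IsRegularOfDegree r) (A : Finset V) (hA : A.Nonempty) (hAc : Aᶜ.Nonempty)
    (lam : ℝ) :
    (G.adjMatrix ℝ).mulVec (fun z => if z ∈ A then (Aᶜ.card : ℝ) else -(A.card : ℝ))
        = lam • (fun z => if z ∈ A then (Aᶜ.card : ℝ) else -(A.card : ℝ)) ↔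
      ∃ q11 q12 q21 q22 : ℝ,
        (∀ x ∈ A, ((A.filter fun y => G.Adj x y).card : ℝ) = q11 ∧
                  ((Aᶜ.filter fun y => G.Adj x y).card : ℝ) = q12) ∧
        (∀ x ∈ Aᶜ, ((A.filter fun y => G.Adj x y).card : ℝ) = q21 ∧
                   ((Aᶜ.filter fun y => G.Adj x y).card : ℝ) = q22) ∧
        q11 + q22 - (r : ℝ) = lam := by
  set a : ℝ := (A.card : ℝ) with ha
  set b : ℝ := (Aᶜ.card : ℝ) with hb
  set n : ℝ := (Fintype.card V : ℝ) with hn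
  have hab : a + b = n := by
    rw [ha, hb, hn]
    push_cast [← Finset.card_add_card_compl A]
    ring
  have hn0 : (0:ℝ) < n := by
    rw [hn]
    exact_mod_cast Fintype.card_pos_iff.2 ⟨hA.choose⟩
  constructor
  · intro h
    refine ⟨(r : ℝ) - b * ((r:ℝ) - lam) / n, b * ((r:ℝ) - lam) / n,
      a * ((r:ℝ) - lam) / n, (r : ℝ) - a * ((r:ℝ) - lam) / n, ?_, ?_, ?_⟩
    · intro x hx
      have hd := deg_split G hreg A x
      have hx2 := congrFun h x
      rw [mulVec_cut G A x] at hx2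
      have hx3 : (lam • fun z => if z ∈ A then b else -a) x = lam * b := by
        show lam * (if x ∈ A then b else -a) = lam * b
        rw [if_pos hx]
      rw [hx3] at hx2
      have h5 : n * ((Aᶜ.filter fun y => G.Adj x y).card : ℝ) = b * ((r:ℝ) - lam) := by
        linear_combination b * hd - hx2 - ((Aᶜ.filter fun y => G.Adj x y).card : ℝ) * hab
      have h6 : ((Aᶜ.filter fun y => G.Adj x y).card : ℝ) = b * ((r:ℝ) - lam) / n := by
        rw [eq_div_iff hn0.ne']
        linear_combination h5
      exact ⟨by linarith, h6⟩
    · intro x hx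
      have hd := deg_split G hreg A x
      have hx2 := congrFun h x
      rw [mulVec_cut G A x] at hx2
      have hxA : x ∉ A := Finset.mem_compl.1 hx
      have hx3 : (lam • fun z => if z ∈ A then b else -a) x = lam * (-a) := by
        show lam * (if x ∈ A then b else -a) = lam * (-a)
        rw [if_neg hxA]
      rw [hx3] at hx2
      have h5 : n * ((A.filter fun y => G.Adj x y).card : ℝ) = a * ((r:ℝ) - lam) := by
        linear_combination a * hd + hx2 - ((A.filter fun y => G.Adj x y).card : ℝ) * hab
      have h6 : ((A.filter fun y => G.Adj x y).card : ℝ) = a * ((r:ℝ) - lam) / n := by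
        rw [eq_div_iff hn0.ne']
        linear_combination h5
      exact ⟨h6, by linarith⟩
    · have hsum : b * ((r:ℝ) - lam) / n + a * ((r:ℝ) - lam) / n = (r:ℝ) - lam := by
        field_simp
        linear_combination ((r:ℝ) - lam) * hab
      linarith
  · rintro ⟨q11, q12, q21, q22, hqA, hqB, hql⟩
    obtain ⟨xa, hxa⟩ := hA
    obtain ⟨xb, hxb⟩ := hAc
    have hd1 : q11 + q12 = (r : ℝ) := by
      have h := deg_split G hreg A xa
      rw [(hqA xa hxa).1, (hqA xa hxa).2] at h
      exact h
    have hd2 : q21 + q22 = (r : ℝ) := by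
      have h := deg_split G hreg A xb
      rw [(hqB xb hxb).1, (hqB xb hxb).2] at h
      exact h
    have hcount : a * q12 = b * q21 := by
      have hL : ∑ x ∈ A, ((Aᶜ.filter fun y => G.Adj x y).card : ℝ) = a * q12 := by
        rw [Finset.sum_congr rfl fun x hx => (hqA x hx).2, Finset.sum_const, nsmul_eq_mul]
      have hR : ∑ x ∈ Aᶜ, ((A.filter fun y => G.Adj x y).card : ℝ) = b * q21 := by
        rw [Finset.sum_congr rfl fun x hx => (hqB x hx).1, Finset.sum_const, nsmul_eq_mul]
      rw [← hL, ← hR]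
      exact cut_sym G A
    funext x
    rw [mulVec_cut G A x]
    by_cases hx : x ∈ A
    · rw [(hqA x hx).1, (hqA x hx).2]
      show b * q11 - a * q12 = lam * (if x ∈ A then b else -a)
      rw [if_pos hx]
      linear_combination b * hql - hcount - b * hd2
    · have hx' : x ∈ Aᶜ := Finset.mem_compl.2 hx
      rw [(hqB x hx').1, (hqB x hx').2]
      show b * q21 - a * q22 = lam * (if x ∈ A then b else -a)
      rw [if_neg hx]
      linear_combination (-a) * hql - hcount + a * hd1

end Equitable
/-- Cheeger-type two-sided bound for the cut size `e(A, Aᶜ)`, with equality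
characterized by equitable partitions with eigenvalue `λ₁` resp. `λ_k`. -/
theorem cut_size_bounds_and_equitable
    {V : Type*} [Fintype V] (G : SimpleGraph V) [DecidableRel G.Adj]
    (r : ℕ) (hconn : G.Connected) (hreg : G.IsRegularOfDegree r)
    (hn : 2 ≤ Fintype.card V)
    (lam1 lamk : ℝ)
    (h1eig : ∃ g : V → ℝ, g ≠ 0 ∧ (G.adjMatrix ℝ).mulVec g = lam1 • g)
    (h1lt : lam1 < (r : ℝ))
    (h1max : ∀ μ : ℝ,
      (∃ g : V → ℝ, g ≠ 0 ∧ (G.adjMatrix ℝ).mulVec g = μ • g) →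
      μ ≠ (r : ℝ) → μ ≤ lam1)
    (hkeig : ∃ g : V → ℝ, g ≠ 0 ∧ (G.adjMatrix ℝ).mulVec g = lamk • g)
    (hkmin : ∀ μ : ℝ,
      (∃ g : V → ℝ, g ≠ 0 ∧ (G.adjMatrix ℝ).mulVec g = μ • g) → lamk ≤ μ)
    (A : Finset V) (hA : A.Nonempty) (hAc : Aᶜ.Nonempty) :
    (((r : ℝ) - lam1) * A.card * Aᶜ.card / Fintype.card V
        ≤ ∑ x ∈ A, ((Aᶜ.filter fun y => G.Adj x y).card : ℝ)) ∧
    ((∑ x ∈ A, ((Aᶜ.filter fun y => G.Adj x y).card : ℝ))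
        ≤ ((r : ℝ) - lamk) * A.card * Aᶜ.card / Fintype.card V) ∧
    ((∑ x ∈ A, ((Aᶜ.filter fun y => G.Adj x y).card : ℝ))
        = ((r : ℝ) - lam1) * A.card * Aᶜ.card / Fintype.card V ↔
      ∃ q11 q12 q21 q22 : ℝ,
        (∀ x ∈ A, ((A.filter fun y => G.Adj x y).card : ℝ) = q11 ∧
                  ((Aᶜ.filter fun y => G.Adj x y).card : ℝ) = q12) ∧
        (∀ x ∈ Aᶜ, ((A.filter fun y => G.Adj x y).card : ℝ) = q21 ∧
                   ((Aᶜ.filter fun y => G.Adj x y).card : ℝ) = q22) ∧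
        q11 + q22 - (r : ℝ) = lam1) ∧
    ((∑ x ∈ A, ((Aᶜ.filter fun y => G.Adj x y).card : ℝ))
        = ((r : ℝ) - lamk) * A.card * Aᶜ.card / Fintype.card V ↔
      ∃ q11 q12 q21 q22 : ℝ,
        (∀ x ∈ A, ((A.filter fun y => G.Adj x y).card : ℝ) = q11 ∧
                  ((Aᶜ.filter fun y => G.Adj x y).card : ℝ) = q12) ∧
        (∀ x ∈ Aᶜ, ((A.filter fun y => G.Adj x y).card : ℝ) = q21 ∧
                   ((Aᶜ.filter fun y => G.Adj x y).card : ℝ) = q22) ∧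
        q11 + q22 - (r : ℝ) = lamk) := by
  -- abbreviations
  set a : ℝ := (A.card : ℝ) with ha
  set b : ℝ := (Aᶜ.card : ℝ) with hb
  set n : ℝ := (Fintype.card V : ℝ) with hnn
  set e : ℝ := ∑ x ∈ A, ((Aᶜ.filter fun y => G.Adj x y).card : ℝ) with he
  have hab : a + b = n := by
    rw [ha, hb, hnn]
    push_cast [← Finset.card_add_card_compl A]
    ring
  have hn0 : (0:ℝ) < n := by
    rw [hnn]
    have : 0 < Fintype.card V := by omega
    exact_mod_cast this
  -- the cut vector
  set f : V → ℝ := fun z => if z ∈ A then b else -a with hfdef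
  have hmv : ∀ x, (G.adjMatrix ℝ).mulVec f x
      = b * ((A.filter fun y => G.Adj x y).card : ℝ)
        - a * ((Aᶜ.filter fun y => G.Adj x y).card : ℝ) := by
    intro x
    rw [hfdef, ha, hb]
    exact mulVec_cut G A x
  have hsplit : ∀ (g : V → ℝ), ∑ x, g x = ∑ x ∈ A, g x + ∑ x ∈ Aᶜ, g x :=
    fun g => (Finset.sum_add_sum_compl A g).symm
  have hfA : ∀ x ∈ A, f x = b := fun x hx => if_pos hx
  have hfB : ∀ x ∈ Aᶜ, f x = -a := fun x hx => if_neg (Finset.mem_compl.1 hx)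
  have hfsum : ∑ x, f x = 0 := by
    rw [hsplit f, Finset.sum_congr rfl hfA, Finset.sum_congr rfl hfB,
      Finset.sum_const, Finset.sum_const, nsmul_eq_mul, nsmul_eq_mul, ← ha, ← hb]
    ring
  -- Hermitian
  have hM : (G.adjMatrix ℝ).IsHermitian := by
    show Matrix.conjTranspose (G.adjMatrix ℝ) = G.adjMatrix ℝ
    ext i j
    rw [Matrix.conjTranspose_apply, SimpleGraph.adjMatrix_apply, SimpleGraph.adjMatrix_apply]
    by_cases h : G.Adj i j
    · rw [if_pos h, if_pos h.symm]; rfl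
    · rw [if_neg h, if_neg fun hc => h hc.symm]; rfl
  have hrconst := fun g hg => eigen_r_const G hconn hreg g hg
  obtain ⟨sp1, sp2, sp3, sp4⟩ :=
    spectral_twoside_aux (G.adjMatrix ℝ) hM (r : ℝ) lam1 lamk h1max hkmin hrconst f hfsum
  -- norm identity
  have hS2 : ∑ x, f x * f x = a * b * n := by
    rw [hsplit fun x => f x * f x]
    have h1 : ∑ x ∈ A, f x * f x = a * (b * b) := by
      rw [Finset.sum_congr rfl fun x hx => by rw [hfA x hx],
        Finset.sum_const, nsmul_eq_mul, ← ha]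
    have h2 : ∑ x ∈ Aᶜ, f x * f x = b * (a * a) := by
      rw [Finset.sum_congr rfl fun x hx => by rw [hfB x hx],
        Finset.sum_const, nsmul_eq_mul, ← hb]
      ring
    rw [h1, h2]
    linear_combination a * b * hab
  -- degree sums
  have hSAA : ∑ x ∈ A, ((A.filter fun y => G.Adj x y).card : ℝ) = (r : ℝ) * a - e := by
    have h : ∑ x ∈ A, (((A.filter fun y => G.Adj x y).card : ℝ)
        + ((Aᶜ.filter fun y => G.Adj x y).card : ℝ)) = ∑ x ∈ A, (r : ℝ) :=
      Finset.sum_congr rfl fun x _ => deg_split G hreg A x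
    rw [Finset.sum_add_distrib, ← he, Finset.sum_const, nsmul_eq_mul, ← ha] at h
    linarith
  have hsym : ∑ x ∈ Aᶜ, ((A.filter fun y => G.Adj x y).card : ℝ) = e := by
    rw [he]; exact (cut_sym G A).symm
  have hSBB : ∑ x ∈ Aᶜ, ((Aᶜ.filter fun y => G.Adj x y).card : ℝ) = (r : ℝ) * b - e := by
    have h : ∑ x ∈ Aᶜ, (((A.filter fun y => G.Adj x y).card : ℝ)
        + ((Aᶜ.filter fun y => G.Adj x y).card : ℝ)) = ∑ x ∈ Aᶜ, (r : ℝ) :=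
      Finset.sum_congr rfl fun x _ => deg_split G hreg A x
    rw [Finset.sum_add_distrib, hsym, Finset.sum_const, nsmul_eq_mul, ← hb] at h
    linarith
  -- quadratic form identity
  have hS1 : ∑ x, f x * (G.adjMatrix ℝ).mulVec f x = (r:ℝ) * a * b * n - e * n ^ 2 := by
    rw [hsplit fun x => f x * (G.adjMatrix ℝ).mulVec f x]
    have h1 : ∑ x ∈ A, f x * (G.adjMatrix ℝ).mulVec f x
        = b * b * ((r:ℝ) * a - e) - b * a * e := by
      have hc : ∀ x ∈ A, f x * (G.adjMatrix ℝ).mulVec f x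
          = b * b * ((A.filter fun y => G.Adj x y).card : ℝ)
            - b * a * ((Aᶜ.filter fun y => G.Adj x y).card : ℝ) := by
        intro x hx
        rw [hfA x hx, hmv x]; ring
      rw [Finset.sum_congr rfl hc, Finset.sum_sub_distrib, ← Finset.mul_sum,
        ← Finset.mul_sum, hSAA, ← he]
    have h2 : ∑ x ∈ Aᶜ, f x * (G.adjMatrix ℝ).mulVec f x
        = -(a * b * e) + a * a * ((r:ℝ) * b - e) := by
      have hc : ∀ x ∈ Aᶜ, f x * (G.adjMatrix ℝ).mulVec f x
          = -(a * b) * ((A.filter fun y => G.Adj x y).card : ℝ)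
            + a * a * ((Aᶜ.filter fun y => G.Adj x y).card : ℝ) := by
        intro x hx
        rw [hfB x hx, hmv x]; ring
      rw [Finset.sum_congr rfl hc, Finset.sum_add_distrib, ← Finset.mul_sum,
        ← Finset.mul_sum, hsym, hSBB]
      ring
    rw [h1, h2]
    linear_combination ((r:ℝ) * a * b - e * (a + b + n)) * hab
  rw [hS1, hS2] at sp1 sp2 sp3 sp4
  have hequiv := fun lam => eigen_iff_equitable G hreg A hA hAc lam
  constructor
  · -- lower bound
    rw [div_le_iff₀ hn0]
    have h2 : (((r:ℝ) - lam1) * a * b) * n ≤ (e * n) * n := by nlinarith [sp2]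
    exact le_of_mul_le_mul_right h2 hn0
  refine ⟨?_, ?_, ?_⟩
  · -- upper bound
    rw [le_div_iff₀ hn0]
    have h2 : (e * n) * n ≤ (((r:ℝ) - lamk) * a * b) * n := by nlinarith [sp1]
    exact le_of_mul_le_mul_right h2 hn0
  · -- equality case λ₁
    rw [eq_div_iff hn0.ne']
    constructor
    · intro h
      have h3 : ∑ x, f x * (G.adjMatrix ℝ).mulVec f x
          = lam1 * ∑ x, f x * f x := by
        rw [hS1, hS2]
        linear_combination (-n) * h
      have h4 := sp3.1 (by rw [hS1, hS2] at h3; exact h3)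
      have h5 : (G.adjMatrix ℝ).mulVec (fun z => if z ∈ A then (Aᶜ.card : ℝ)
          else -(A.card : ℝ)) = lam1 • (fun z => if z ∈ A then (Aᶜ.card : ℝ)
          else -(A.card : ℝ)) := by
        rw [← ha, ← hb, ← hfdef]; exact h4
      exact (hequiv lam1).1 h5
    · intro h
      have h5 := (hequiv lam1).2 h
      rw [← ha, ← hb, ← hfdef] at h5
      have h3 := sp3.2 h5
      have h2 : (e * n) * n = (((r:ℝ) - lam1) * a * b) * n := by linear_combination (-1 : ℝ) * h3
      exact mul_right_cancel₀ hn0.ne' h2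
  · -- equality case λ_k
    rw [eq_div_iff hn0.ne']
    constructor
    · intro h
      have h3 : (r:ℝ) * a * b * n - e * n ^ 2 = lamk * (a * b * n) := by
        linear_combination (-n) * h
      have h4 := sp4.1 h3
      have h5 : (G.adjMatrix ℝ).mulVec (fun z => if z ∈ A then (Aᶜ.card : ℝ)
          else -(A.card : ℝ)) = lamk • (fun z => if z ∈ A then (Aᶜ.card : ℝ)
          else -(A.card : ℝ)) := by
        rw [← ha, ← hb, ← hfdef]; exact h4
      exact (hequiv lamk).1 h5
    · intro h
      have h5 := (hequiv lamk).2 h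
      rw [← ha, ← hb, ← hfdef] at h5
      have h3 := sp4.2 h5
      have h2 : (e * n) * n = (((r:ℝ) - lamk) * a * b) * n := by linear_combination (-1 : ℝ) * h3
      exact mul_right_cancel₀ hn0.ne' h2
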